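/- Define K(m,n) = Σ_{r=0}^{m+n} S(m,n,r)/(r+2)², where S(m,n,r) is the coefficient of x^{r+1} in the polynomial p_m(x)·q_{n+1}(x) and q_{n+1}(x) = ∫₀ˣ p_n(t) dt. Then: (i) if m, n are natural numbers with |m−n| ≥ 2, then K(m,n) + K(n,m) = 0; (ii) for every natural number n ≥ 1, 2·K(n,n) = 1/( n(2n+1)(2n+2) ); and (iii) for every natural number n, K(n+1,n) + K(n,n+1) = −1/( (2n+1)(2n+2)(2n+3) ). -/

import Mathlib

open Polynomial

/-- The shifted Legendre polynomial `pₙ(x) = (1/n!) dⁿ/dxⁿ (xⁿ(x-1)ⁿ)`, as a polynomial. -/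
noncomputable def shiftedLegendrePoly (n : ℕ) : Polynomial ℝ :=
  C ((Nat.factorial n : ℝ))⁻¹ * (derivative^[n] (X ^ n * (X - 1) ^ n))

/-- The integrated shifted Legendre polynomial `q_{n+1}(x) = ∫₀ˣ pₙ(t) dt`. -/
noncomputable def qPoly (n : ℕ) : Polynomial ℝ :=
  ∑ k ∈ Finset.range (n + 1), C ((shiftedLegendrePoly n).coeff k / ((k : ℝ) + 1)) * X ^ (k + 1)

/-- `S m n r` is the coefficient of `x^(r+1)` in `p_m(x) * q_{n+1}(x)`. -/
noncomputable def S (m n r : ℕ) : ℝ := (shiftedLegendrePoly m * qPoly n).coeff (r + 1)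


/-- `K m n = ∑_{r=0}^{m+n} S(m,n,r)/(r+2)²`. -/
noncomputable def K (m n : ℕ) : ℝ := ∑ r ∈ Finset.range (m + n + 1), S m n r / ((r : ℝ) + 2) ^ 2

noncomputable section
namespace Leg19

def f (n : ℕ) : ℝ[X] := X ^ n * (X - 1) ^ n

def PI (h : ℝ[X]) : ℝ := ∫ x in (0:ℝ)..1, h.eval x

lemma pintg (h : ℝ[X]) : IntervalIntegrable (fun x => h.eval x) MeasureTheory.volume 0 1 :=
  (h.continuous).intervalIntegrable _ _

lemma PI_add (a b : ℝ[X]) : PI (a + b) = PI a + PI b := by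
  simp only [PI, eval_add]
  exact intervalIntegral.integral_add (pintg a) (pintg b)

lemma PI_C_mul (c : ℝ) (a : ℝ[X]) : PI (C c * a) = c * PI a := by
  simp only [PI, eval_mul, eval_C]
  exact intervalIntegral.integral_const_mul c _

lemma PI_smul (c : ℝ) (a : ℝ[X]) : PI (c • a) = c * PI a := by
  rw [smul_eq_C_mul, PI_C_mul]

lemma PI_zero : PI 0 = 0 := by simp [PI]

lemma PI_neg (a : ℝ[X]) : PI (-a) = - PI a := by
  have := (PI_add a (-a)).symm
  simp [PI_zero] at this
  linarith

lemma PI_sub (a b : ℝ[X]) : PI (a - b) = PI a - PI b := by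
  rw [sub_eq_add_neg, PI_add, PI_neg]; ring

lemma PI_derivative (h : ℝ[X]) : PI (derivative h) = h.eval 1 - h.eval 0 := by
  exact intervalIntegral.integral_eq_sub_of_hasDerivAt
    (fun x _ => h.hasDerivAt x) (pintg _)

lemma PI_mul_derivative (g h : ℝ[X]) :
    PI (g * derivative h) = (g*h).eval 1 - (g*h).eval 0 - PI (derivative g * h) := by
  have := PI_derivative (g * h)
  rw [derivative_mul, PI_add] at this
  linarith

lemma PI_X_pow (k : ℕ) : PI (X ^ k) = 1 / (k + 1) := by
  simp [PI, integral_pow]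


lemma f_dvd (n : ℕ) : ∀ k, k ≤ n → ∃ g : ℝ[X],
    derivative^[k] (f n) = X ^ (n-k) * (X - 1) ^ (n-k) * g := by
  intro k
  induction k with
  | zero => exact fun _ => ⟨1, by simp [f]⟩
  | succ k ih =>
    intro hk
    obtain ⟨g, hg⟩ := ih (Nat.le_of_succ_le hk)
    set b := n - (k+1) with hb
    have hnk : n - k = b + 1 := by omega
    refine ⟨(((b:ℕ)+1 : ℕ) : ℝ[X]) * ((X-1)*g + X*g) + X*(X-1)*derivative g, ?_⟩
    rw [Function.iterate_succ_apply', hg, hnk]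
    simp only [derivative_mul, derivative_pow, derivative_X, derivative_sub, derivative_one,
      Nat.add_sub_cancel, sub_zero, mul_one]
    simp only [map_add, map_one, map_natCast]
    push_cast
    ring

lemma eval_vanish_zero {n k : ℕ} (hk : k < n) : (derivative^[k] (f n)).eval 0 = 0 := by
  obtain ⟨g, hg⟩ := f_dvd n k hk.le
  have : 0 < n - k := by omega
  simp [hg, zero_pow this.ne']

lemma eval_vanish_one {n k : ℕ} (hk : k < n) : (derivative^[k] (f n)).eval 1 = 0 := by
  obtain ⟨g, hg⟩ := f_dvd n k hk.le
  have : 0 < n - k := by omega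
  simp [hg, zero_pow this.ne']

lemma PI_ibp_iter (n : ℕ) : ∀ j, j ≤ n → ∀ g : ℝ[X],
    PI (g * derivative^[j] (f n)) = (-1:ℝ)^j * PI (derivative^[j] g * f n) := by
  intro j
  induction j with
  | zero => intro _ g; simp
  | succ j ih =>
    intro hj g
    have hb1 : (g * derivative^[j] (f n)).eval 1 = 0 := by
      simp [eval_vanish_one (show j < n by omega)]
    have hb0 : (g * derivative^[j] (f n)).eval 0 = 0 := by
      simp [eval_vanish_zero (show j < n by omega)]
    rw [Function.iterate_succ_apply', PI_mul_derivative, hb1, hb0,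
      ih (by omega) (derivative g)]
    rw [← Function.iterate_succ_apply]
    ring

lemma PI_beta : ∀ b a : ℕ, PI (X ^ a * (X - 1) ^ b)
    = (-1:ℝ)^b * ((a.factorial * b.factorial : ℝ) / (a+b+1).factorial) := by
  intro b
  induction b with
  | zero =>
    intro a
    have hfa : (a.factorial : ℝ) ≠ 0 := by positivity
    simp [PI_X_pow, Nat.factorial_succ]
    field_simp
  | succ b ih =>
    intro a
    have ha : ((a:ℝ)+1) ≠ 0 := by positivity
    have hder : derivative (C (((a:ℝ)+1))⁻¹ * X ^ (a+1)) = X ^ a := by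
      simp [derivative_C_mul, derivative_X_pow]
      rw [show ((a:ℝ[X]) + 1) = C ((a:ℝ)+1) by rw [C_add, C_1, C_eq_natCast],
        ← mul_assoc, ← C_mul, inv_mul_cancel₀ ha, C_1, one_mul]
    have key : PI (X ^ a * (X - 1) ^ (b+1)) =
        ((X - 1) ^ (b+1) * (C (((a:ℝ)+1))⁻¹ * X ^ (a+1))).eval 1
        - ((X - 1) ^ (b+1) * (C (((a:ℝ)+1))⁻¹ * X ^ (a+1))).eval 0
        - PI (derivative ((X - 1) ^ (b+1)) * (C (((a:ℝ)+1))⁻¹ * X ^ (a+1))) := by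
      rw [← PI_mul_derivative, hder, mul_comm]
    rw [key]
    have hdg : derivative ((X - 1 : ℝ[X]) ^ (b+1)) = C ((b:ℝ)+1) * (X - 1) ^ b := by
      simp only [derivative_pow, derivative_sub, derivative_X, derivative_one, sub_zero,
        mul_one, Nat.add_sub_cancel, Nat.cast_add, Nat.cast_one]
    rw [hdg]
    have : (C ((b:ℝ)+1) * (X - 1) ^ b * (C (((a:ℝ)+1))⁻¹ * X ^ (a+1)) : ℝ[X])
        = C (((b:ℝ)+1) * (((a:ℝ)+1))⁻¹) * (X ^ (a+1) * (X - 1) ^ b) := by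
      rw [C_mul]; ring
    rw [this, PI_C_mul, ih (a+1)]
    simp only [eval_mul, eval_pow, eval_sub, eval_X, eval_one, eval_C]
    have e1 : ((a+1).factorial : ℝ) = ((a:ℝ)+1) * a.factorial := by
      rw [Nat.factorial_succ]; push_cast; ring
    have e2 : ((b+1).factorial : ℝ) = ((b:ℝ)+1) * b.factorial := by
      rw [Nat.factorial_succ]; push_cast; ring
    have e3 : a + 1 + b + 1 = a + (b+1) + 1 := by omega
    rw [e3, e1, e2]
    have hf : ((a + (b+1) + 1).factorial : ℝ) ≠ 0 := by positivity
    field_simp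
    ring

lemma base_rel (n : ℕ) : X * (X - 1) * derivative (f n) = (n : ℝ[X]) * ((2*X - 1) * f n) := by
  rcases n with _ | m
  · simp [f]
  · rw [f]
    simp only [derivative_mul, derivative_pow, derivative_X, derivative_sub, derivative_one,
      sub_zero, mul_one, Nat.add_sub_cancel, map_add, map_one, map_natCast]
    push_cast
    ring

lemma natDegree_A : (X * (X - 1) : ℝ[X]).natDegree ≤ 2 := by
  compute_degree

lemma dA1 : derivative (X * (X - 1) : ℝ[X]) = 2*X - 1 := by
  simp [derivative_mul]
  ring

lemma dB1 : derivative (2*X - 1 : ℝ[X]) = 2 := by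
  simp

lemma dA2 : derivative^[2] (X * (X - 1) : ℝ[X]) = 2 := by
  rw [Function.iterate_succ_apply', Function.iterate_one, dA1, dB1]

lemma natDegree_B : (2*X - 1 : ℝ[X]).natDegree ≤ 1 := by
  compute_degree

section ODE

lemma sum3 (A B : ℝ[X]) (hA : A.natDegree ≤ 2) (m : ℕ) :
    ∑ k ∈ Finset.range (m+2).succ, (m+2).choose k • (derivative^[m+2-k] A * derivative^[k] B)
    = (m+2).choose m • (derivative^[2] A * derivative^[m] B)
      + (m+2).choose (m+1) • (derivative^[1] A * derivative^[m+1] B)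
      + (m+2).choose (m+2) • (derivative^[0] A * derivative^[m+2] B) := by
  rw [show (m+2).succ = m+2+1 from rfl, Finset.sum_range_succ, Finset.sum_range_succ,
    Finset.sum_range_succ]
  have hz : ∀ k ∈ Finset.range m,
      (m+2).choose k • (derivative^[m+2-k] A * derivative^[k] B) = 0 := by
    intro k hk
    simp only [Finset.mem_range] at hk
    rw [iterate_derivative_eq_zero (lt_of_le_of_lt hA (by omega : 2 < m+2-k))]
    simp
  rw [Finset.sum_eq_zero hz, zero_add, show m+2-m = 2 by omega,
    show m+2-(m+1) = 1 by omega, Nat.sub_self]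

lemma ode (n : ℕ) :
    X*(X-1) * derivative (derivative (derivative^[n] (f n)))
      + (2*X-1) * derivative (derivative^[n] (f n))
    = ((n:ℝ[X]) * ((n:ℝ[X])+1)) * derivative^[n] (f n) := by
  rcases n with _ | m
  · simp [f]
  · have base := congrArg (fun t => derivative^[m+2] t) (base_rel (m+1))
    rw [iterate_derivative_mul, iterate_derivative_natCast_mul, iterate_derivative_mul,
      sum3 _ _ natDegree_A m, sum3 _ _ (natDegree_B.trans (by norm_num)) m] at base
    set P := derivative^[m+1] (f (m+1)) with hP
    have e1 : derivative^[m] (derivative (f (m+1))) = P :=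
      (Function.iterate_succ_apply derivative m (f (m+1))).symm
    have e2 : derivative^[m+1] (derivative (f (m+1))) = derivative P := by
      rw [Function.iterate_succ_apply', e1]
    have e3 : derivative^[m+2] (derivative (f (m+1))) = derivative (derivative P) := by
      rw [show m+2 = m+1+1 from rfl, Function.iterate_succ_apply', e2]
    have e4 : derivative^[m+2] (f (m+1)) = derivative P := by
      rw [show m+2 = m+1+1 from rfl, Function.iterate_succ_apply']
    have hB2 : derivative^[2] (2*X-1 : ℝ[X]) = 0 :=
      iterate_derivative_eq_zero (natDegree_B.trans_lt (by norm_num))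
    have hB1 : derivative^[1] (2*X-1 : ℝ[X]) = 2 := by
      rw [Function.iterate_one, dB1]
    have hA1' : derivative^[1] (X*(X-1) : ℝ[X]) = 2*X-1 := by
      rw [Function.iterate_one, dA1]
    rw [e1, e2, e3, e4, dA2, hA1', hB2, hB1, Function.iterate_zero_apply,
      Function.iterate_zero_apply, Nat.choose_self] at base
    have hc1 : (m+2).choose (m+1) = m+2 := by
      rw [show m+2 = m+1+1 from rfl, Nat.choose_succ_self_right]
    rw [hc1] at base
    have hch : (((m+2).choose m : ℝ[X])) * 2 = ((m:ℝ[X])+2) * ((m:ℝ[X])+1) := by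
      have h1 : (m+2).choose m = (m+2).choose 2 := by
        have := Nat.choose_symm (show 2 ≤ m+2 by omega)
        simpa using this
      have h2 : (m+2).choose 2 * 2 = (m+2) * (m+1) := by
        have hd : 2 ∣ (m+2) * (m+1) := by
          rw [mul_comm]
          exact (Nat.even_mul_succ_self (m+1)).two_dvd
        rw [Nat.choose_two_right, show m+2-1 = m+1 from by omega, Nat.div_mul_cancel hd]
      have := congrArg (Nat.cast : ℕ → ℝ[X]) (h1 ▸ h2)
      push_cast at this
      exact this
    simp only [smul_mul_assoc, nsmul_eq_mul] at base
    push_cast at base ⊢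
    linear_combination base - P * hch
end ODE


local notation "p" => shiftedLegendrePoly

lemma p_def (n : ℕ) : p n = C ((n.factorial : ℝ))⁻¹ * derivative^[n] (f n) := rfl

lemma f_monic (n : ℕ) : (f n).Monic := by
  have h2 : ((X - 1 : ℝ[X])).Monic := by simpa using monic_X_sub_C (1:ℝ)
  exact (monic_X_pow n).mul (h2.pow n)

lemma natDegree_f (n : ℕ) : (f n).natDegree = 2*n := by
  have h2 : ((X - 1 : ℝ[X])).Monic := by simpa using monic_X_sub_C (1:ℝ)
  rw [f, (monic_X_pow n).natDegree_mul (h2.pow n), natDegree_X_pow,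
    h2.natDegree_pow]
  have : (X - 1 : ℝ[X]).natDegree = 1 := by
    simpa using natDegree_X_sub_C (1:ℝ)
  rw [this]; ring

lemma natDegree_p_le (n : ℕ) : (p n).natDegree ≤ n := by
  refine (natDegree_C_mul_le _ _).trans ((natDegree_iterate_derivative _ _).trans ?_)
  rw [show (X^n*(X-1)^n : ℝ[X]) = f n from rfl, natDegree_f]; omega

lemma coeff_p_top (n : ℕ) : (p n).coeff n = ((2*n).choose n : ℝ) := by
  rw [p_def, coeff_C_mul, coeff_iterate_derivative]
  have hc : (f n).coeff (n + n) = 1 := by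
    have := (f_monic n).coeff_natDegree
    rwa [natDegree_f, two_mul] at this
  rw [hc, Nat.descFactorial_eq_factorial_mul_choose]
  have h1 : ((n.factorial : ℝ)) ≠ 0 := by positivity
  push_cast
  rw [show n + n = 2*n by ring]
  field_simp
  try ring

lemma PI_orth {n : ℕ} (g : ℝ[X]) (hg : g.natDegree < n) : PI (g * p n) = 0 := by
  rw [p_def, show g * (C ((n.factorial : ℝ))⁻¹ * derivative^[n] (f n))
      = C ((n.factorial : ℝ))⁻¹ * (g * derivative^[n] (f n)) by ring, PI_C_mul,
    PI_ibp_iter n n le_rfl g, iterate_derivative_eq_zero hg]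
  simp [PI_zero]

lemma PI_orth' {k : ℕ} (g : ℝ[X]) (h1 : g.natDegree ≤ k) (h2 : g.coeff k = 0) :
    PI (g * p k) = 0 := by
  rcases eq_or_ne g 0 with rfl | hg
  · simp [PI_zero]
  · rcases lt_or_eq_of_le h1 with h | h
    · exact PI_orth g h
    · exact absurd (h ▸ h2) (by simpa [h, leadingCoeff] using leadingCoeff_ne_zero.mpr hg)

lemma choose_ne (k : ℕ) : (((2*k).choose k : ℝ)) ≠ 0 := by
  have := Nat.choose_pos (show k ≤ 2*k by omega)
  positivity

lemma PI_p_sq (k : ℕ) : PI (p k * p k) = 1 / (2*(k:ℝ)+1) := by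
  have hdecomp : p k = (p k - C (((2*k).choose k : ℝ)) * X ^ k)
      + C (((2*k).choose k : ℝ)) * X ^ k := by ring
  have h0 : PI ((p k - C (((2*k).choose k : ℝ)) * X ^ k) * p k) = 0 := by
    refine PI_orth' _ ((natDegree_sub_le _ _).trans (max_le (natDegree_p_le k)
      ((natDegree_C_mul_le _ _).trans (le_of_eq (natDegree_X_pow k))))) ?_
    simp [coeff_p_top, coeff_C_mul, coeff_X_pow]
  have hsplit : PI (p k * p k) = PI ((p k - C (((2*k).choose k : ℝ)) * X ^ k) * p k)
      + ((2*k).choose k : ℝ) * PI (X ^ k * p k) := by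
    rw [← PI_C_mul, ← PI_add]
    congr 1
    ring
  have hXk : PI (X ^ k * p k) = ((k.factorial : ℝ))⁻¹ * ((-1:ℝ)^k * (k.factorial : ℝ)
      * PI (f k)) := by
    rw [p_def, show X ^ k * (C ((k.factorial : ℝ))⁻¹ * derivative^[k] (f k))
        = C ((k.factorial : ℝ))⁻¹ * (X ^ k * derivative^[k] (f k)) by ring, PI_C_mul,
      PI_ibp_iter k k le_rfl (X ^ k), iterate_derivative_X_pow_eq_C_mul,
      Nat.descFactorial_self, Nat.sub_self, pow_zero, mul_one, PI_C_mul]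
    ring
  have hfk : PI (f k) = (-1:ℝ)^k * ((k.factorial * k.factorial : ℝ) / (k+k+1).factorial) := by
    rw [show f k = X ^ k * (X - 1) ^ k from rfl, PI_beta]
  have hkf : (k.factorial : ℝ) ≠ 0 := by positivity
  have hfac : ((2*k).choose k : ℝ) * k.factorial * k.factorial = (2*k).factorial := by
    have := Nat.choose_mul_factorial_mul_factorial (show k ≤ 2*k by omega)
    rw [show 2*k - k = k by omega] at this
    exact_mod_cast congrArg (Nat.cast : ℕ → ℝ) this
  have hfs : ((k+k+1).factorial : ℝ) = (2*(k:ℝ)+1) * (2*k).factorial := by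
    rw [show k+k+1 = (2*k)+1 by ring, Nat.factorial_succ]
    push_cast; ring
  have h2k : ((2*k).factorial : ℝ) ≠ 0 := by positivity
  have h2k1 : (2*(k:ℝ)+1) ≠ 0 := by positivity
  rw [hsplit, h0, hXk, hfk, hfs, zero_add]
  rw [show ((2 * k).choose k : ℝ) * ((↑k.factorial)⁻¹ * ((-1) ^ k * ↑k.factorial *
      ((-1) ^ k * (↑k.factorial * ↑k.factorial / (((2*(k:ℝ)+1) * ↑(2 * k).factorial))))))
      = ((-1:ℝ)^k)^2 * (((2 * k).choose k : ℝ) * k.factorial * k.factorial)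
        * ((↑k.factorial)⁻¹ * ↑k.factorial) / ((2*(k:ℝ)+1) * ↑(2 * k).factorial) by ring,
    hfac, ← pow_mul, inv_mul_cancel₀ hkf]
  have : ((-1:ℝ))^(k*2) = 1 := by
    rw [pow_mul']; norm_num
  rw [this]
  field_simp

lemma PI_mul_p {k : ℕ} (g : ℝ[X]) (hg : g.natDegree ≤ k) :
    PI (g * p k) = g.coeff k / (((2*k).choose k : ℝ)) * (1/(2*(k:ℝ)+1)) := by
  set c := g.coeff k / (((2*k).choose k : ℝ)) with hc
  have h0 : PI ((g - C c * p k) * p k) = 0 := by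
    refine PI_orth' _ ((natDegree_sub_le _ _).trans (max_le hg
      ((natDegree_C_mul_le _ _).trans (natDegree_p_le k)))) ?_
    have := choose_ne k
    simp only [coeff_sub, coeff_C_mul, coeff_p_top, hc]
    field_simp
    ring
  have hsp : PI (g * p k) = PI ((g - C c * p k) * p k) + c * PI (p k * p k) := by
    rw [← PI_C_mul, ← PI_add]; congr 1; ring
  rw [hsp, h0, PI_p_sq, zero_add]

local notation "q" => qPoly

lemma coeff_q_zero (n : ℕ) : (qPoly n).coeff 0 = 0 := by
  simp [qPoly, coeff_X_pow, Polynomial.finset_sum_coeff]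

lemma eval_q_zero (n : ℕ) : (qPoly n).eval 0 = 0 := by
  rw [← coeff_zero_eq_eval_zero, coeff_q_zero]

lemma natDegree_q_le (n : ℕ) : (qPoly n).natDegree ≤ n+1 := by
  refine natDegree_sum_le_of_forall_le _ _ fun k hk => ?_
  refine (natDegree_C_mul_le _ _).trans ((natDegree_X_pow _).le.trans ?_)
  simp only [Finset.mem_range] at hk
  omega

lemma coeff_q_top (n : ℕ) : (qPoly n).coeff (n+1) = (p n).coeff n / ((n:ℝ)+1) := by
  rw [qPoly, Polynomial.finset_sum_coeff]
  rw [Finset.sum_eq_single n]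
  · simp [coeff_C_mul, coeff_X_pow]
  · intro k hk hkn
    simp [coeff_C_mul, coeff_X_pow, (Ne.symm hkn : n ≠ k)]
  · intro h
    exact absurd (Finset.self_mem_range_succ n) h

lemma derivative_q (n : ℕ) : derivative (qPoly n) = p n := by
  rw [qPoly, derivative_sum]
  have hp : p n = ∑ k ∈ Finset.range (n+1), C ((p n).coeff k) * X ^ k := by
    conv_lhs => rw [(p n).as_sum_range' (n+1) (Nat.lt_succ_of_le (natDegree_p_le n))]
    exact Finset.sum_congr rfl fun k _ => (C_mul_X_pow_eq_monomial).symm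
  conv_rhs => rw [hp]
  refine Finset.sum_congr rfl fun k _ => ?_
  rw [derivative_C_mul, derivative_X_pow]
  have hk : ((k:ℝ)+1) ≠ 0 := by positivity
  push_cast
  rw [← mul_assoc, ← C_mul, div_mul_cancel₀ _ hk]

lemma q_eq_X_mul_divX (n : ℕ) : qPoly n = X * (qPoly n).divX := by
  have := X_mul_divX_add (qPoly n)
  rwa [coeff_q_zero, map_zero, add_zero, eq_comm] at this

lemma natDegree_divX_q_le (n : ℕ) : ((qPoly n).divX).natDegree ≤ n := by
  rcases eq_or_ne ((qPoly n).divX) 0 with h | h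
  · simp [h]
  · have h2 : qPoly n ≠ 0 := by
      rw [q_eq_X_mul_divX n]
      exact mul_ne_zero X_ne_zero h
    have := natDegree_q_le n
    rw [q_eq_X_mul_divX n, natDegree_mul X_ne_zero h, natDegree_X] at this
    omega

lemma eval_q_one {n : ℕ} (hn : 1 ≤ n) : (qPoly n).eval 1 = 0 := by
  have h := PI_derivative (qPoly n)
  rw [derivative_q, eval_q_zero, sub_zero] at h
  rw [← h, show p n = 1 * p n by ring]
  exact PI_orth 1 (by simp; omega)


lemma comp_iter (k : ℕ) (g : ℝ[X]) :
    derivative^[k] (g.comp (1 - X)) = C ((-1:ℝ)^k) * ((derivative^[k] g).comp (1 - X)) := by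
  induction k generalizing g with
  | zero => simp
  | succ k ih =>
    rw [Function.iterate_succ_apply', ih, derivative_C_mul, derivative_comp,
      Function.iterate_succ_apply']
    simp only [derivative_sub, derivative_one, derivative_X, zero_sub, pow_succ]
    rw [C_mul, map_neg, map_one]
    ring

lemma f_comp (n : ℕ) : (f n).comp (1 - X) = f n := by
  rw [f, mul_comp, pow_comp, pow_comp, X_comp, sub_comp, X_comp, one_comp]
  rw [show ((1:ℝ[X]) - X - 1) = -X by ring, show ((1:ℝ[X]) - X) = -(X-1) by ring,
    neg_pow, neg_pow (X : ℝ[X])]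
  ring_nf
  rw [show ((-1:ℝ[X]))^(n*2) = 1 by rw [pow_mul']; norm_num]
  ring

lemma p_comp (n : ℕ) : (p n).comp (1 - X) = C ((-1:ℝ)^n) * p n := by
  have h := comp_iter n (f n)
  rw [f_comp] at h
  have h2 := congrArg (fun t => C ((-1:ℝ)^n) * t) h
  rw [← mul_assoc, ← C_mul, ← pow_add, ← two_mul, pow_mul] at h2
  norm_num at h2
  rw [p_def, mul_comp, C_comp, h2.symm, map_pow, map_neg, map_one]
  ring

lemma p_eval_symm (n : ℕ) (x : ℝ) : (p n).eval (1 - x) = (-1:ℝ)^n * (p n).eval x := by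
  have := congrArg (fun t => t.eval x) (p_comp n)
  simp only [eval_comp, eval_mul, eval_C, eval_sub, eval_one, eval_X] at this
  exact this

lemma PI_X_p_sq (n : ℕ) : PI (X * (p n * p n)) = (1/2) * PI (p n * p n) := by
  have hint := intervalIntegral.integral_comp_sub_left (a := (0:ℝ)) (b := 1)
    (fun t => (X * (p n * p n)).eval t) 1
  norm_num at hint
  have h2 : PI ((1 - X) * (p n * p n)) = PI (X * (p n * p n)) := by
    simp only [PI, eval_mul, eval_X, eval_sub, eval_one]
    rw [← hint]
    apply intervalIntegral.integral_congr
    intro x _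
    simp only [p_eval_symm]
    rw [show (-1:ℝ)^n * eval x (p n) * ((-1)^n * eval x (p n))
        = ((-1:ℝ)^n)^2 * (eval x (p n) * eval x (p n)) by ring, ← pow_mul, pow_mul']
    norm_num
  have h3 : ((1 - X) * (p n * p n) : ℝ[X]) = p n * p n - X * (p n * p n) := by ring
  rw [h3, PI_sub] at h2
  linarith


lemma PI_eq_sum {N : ℕ} (h : ℝ[X]) (hN : h.natDegree < N) :
    PI h = ∑ s ∈ Finset.range N, h.coeff s / ((s:ℝ)+1) := by
  rw [PI]
  have heq : Set.EqOn (fun x => h.eval x)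
      (fun x => ∑ s ∈ Finset.range N, h.coeff s * x^s) (Set.uIcc (0:ℝ) 1) :=
    fun x _ => h.eval_eq_sum_range' hN x
  rw [intervalIntegral.integral_congr heq, intervalIntegral.integral_finset_sum]
  · refine Finset.sum_congr rfl fun s _ => ?_
    rw [intervalIntegral.integral_const_mul, integral_pow]
    norm_num
    ring
  · intro s _
    exact (continuous_const.mul (continuous_pow s)).intervalIntegrable _ _

lemma K_add_K (m n : ℕ) : K m n + K n m = PI ((qPoly m).divX * qPoly n) := by
  have hdeg : ((qPoly m).divX * qPoly n).natDegree < m+n+1+1 :=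
    lt_of_le_of_lt (natDegree_mul_le.trans
      (add_le_add (natDegree_divX_q_le m) (natDegree_q_le n))) (by omega)
  rw [PI_eq_sum _ hdeg, Finset.sum_range_succ']
  have hc0 : ((qPoly m).divX * qPoly n).coeff 0 = 0 := by
    rw [mul_coeff_zero, coeff_q_zero, mul_zero]
  rw [hc0]
  norm_num
  rw [K, K, show n+m = m+n from by omega, ← Finset.sum_add_distrib]
  refine Finset.sum_congr rfl fun r _ => ?_
  have h1 : derivative (qPoly m * qPoly n)
      = p m * qPoly n + qPoly m * p n := by
    rw [derivative_mul, derivative_q, derivative_q]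
  have hcd := coeff_derivative (qPoly m * qPoly n) (r+1)
  rw [h1] at hcd
  have h2 : S m n r + S n m r = (qPoly m * qPoly n).coeff (r+1+1) * (((r:ℝ)+1)+1) := by
    simp only [S, coeff_add] at hcd ⊢
    rw [show shiftedLegendrePoly n * qPoly m = qPoly m * p n from mul_comm _ _]
    push_cast at hcd
    linarith [hcd]
  have h3 : (qPoly m * qPoly n).coeff (r+1+1) = ((qPoly m).divX * qPoly n).coeff (r+1) := by
    conv_lhs => rw [q_eq_X_mul_divX m, mul_assoc, coeff_X_mul]
  have hr2 : ((r:ℝ)+2) ≠ 0 := by positivity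
  rw [← add_div, h2, h3]
  push_cast
  field_simp
  ring

lemma ode_p (m : ℕ) : X*(X-1) * derivative (derivative (p m)) + (2*X-1) * derivative (p m)
    = ((m:ℝ[X]) * ((m:ℝ[X])+1)) * p m := by
  rw [p_def]
  simp only [derivative_C_mul]
  linear_combination C ((m.factorial:ℝ))⁻¹ * ode m

lemma q_formula (m : ℕ) :
    ((m:ℝ[X]) * ((m:ℝ[X])+1)) * qPoly m = X * (X - 1) * derivative (p m) := by
  have hL : derivative (X * (X - 1) * derivative (p m))
      = ((m:ℝ[X]) * ((m:ℝ[X])+1)) * p m := by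
    rw [derivative_mul, dA1]
    linear_combination ode_p m
  have hR : derivative (((m:ℝ[X]) * ((m:ℝ[X])+1)) * qPoly m)
      = ((m:ℝ[X]) * ((m:ℝ[X])+1)) * p m := by
    rw [derivative_mul, derivative_q]
    have hz : derivative ((m:ℝ[X]) * ((m:ℝ[X])+1)) = 0 := by
      simp
    rw [hz, zero_mul, zero_add]
  have hd0 : derivative (((m:ℝ[X]) * ((m:ℝ[X])+1)) * qPoly m
      - X * (X - 1) * derivative (p m)) = 0 := by
    rw [derivative_sub, hL, hR, sub_self]
  have hc := eq_C_of_natDegree_eq_zero (natDegree_eq_zero_of_derivative_eq_zero hd0)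
  have h0 : (((m:ℝ[X]) * ((m:ℝ[X])+1)) * qPoly m
      - X * (X - 1) * derivative (p m)).coeff 0 = 0 := by
    simp [mul_coeff_zero, coeff_q_zero]
  rw [h0, C_0] at hc
  exact sub_eq_zero.mp hc

lemma divX_formula (m : ℕ) :
    ((m:ℝ[X]) * ((m:ℝ[X])+1)) * (qPoly m).divX = (X - 1) * derivative (p m) := by
  apply mul_left_cancel₀ (X_ne_zero : (X:ℝ[X]) ≠ 0)
  rw [show X * (((m:ℝ[X]) * ((m:ℝ[X])+1)) * (qPoly m).divX)
      = ((m:ℝ[X]) * ((m:ℝ[X])+1)) * (X * (qPoly m).divX) by ring,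
    ← q_eq_X_mul_divX, q_formula m]
  ring

lemma star (m n : ℕ) :
    ((m:ℝ)*((m:ℝ)+1)) * (K m n + K n m)
    = - PI (p m * qPoly n) - PI ((X-1) * p m * p n) := by
  rw [K_add_K, ← PI_C_mul]
  have hC : C ((m:ℝ)*((m:ℝ)+1)) * ((qPoly m).divX * qPoly n)
      = (((m:ℝ[X]) * ((m:ℝ[X])+1)) * (qPoly m).divX) * qPoly n := by
    rw [C_mul, C_add, C_1, C_eq_natCast]
    ring
  rw [hC, divX_formula m]
  have hibp := PI_derivative ((X-1) * p m * qPoly n)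
  have hev1 : ((X-1) * p m * qPoly n).eval 1 = 0 := by simp
  have hev0 : ((X-1) * p m * qPoly n).eval 0 = 0 := by simp [eval_q_zero]
  rw [hev1, hev0, sub_zero] at hibp
  have hexp : derivative ((X-1) * p m * qPoly n)
      = p m * qPoly n + ((X - 1) * derivative (p m)) * qPoly n + (X-1) * p m * p n := by
    simp only [derivative_mul, derivative_sub, derivative_X, derivative_one, derivative_q,
      sub_zero]
    ring
  rw [hexp, PI_add, PI_add] at hibp
  linarith

lemma case1 {m n : ℕ} (h : n + 2 ≤ m) : K m n + K n m = 0 := by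
  have hs := star m n
  have h1 : PI (p m * qPoly n) = 0 := by
    rw [show p m * qPoly n = qPoly n * p m from mul_comm _ _]
    exact PI_orth _ (lt_of_le_of_lt (natDegree_q_le n) (by omega))
  have hX1 : (X - 1 : ℝ[X]).natDegree ≤ 1 := by compute_degree
  have h2 : PI ((X-1) * p m * p n) = 0 := by
    rw [show (X-1) * p m * p n = ((X-1) * p n) * p m by ring]
    refine PI_orth _ (lt_of_le_of_lt (natDegree_mul_le.trans
      (add_le_add hX1 (natDegree_p_le n))) (by omega))
  rw [h1, h2] at hs
  have hm1 : (1:ℝ) ≤ (m:ℝ) := by exact_mod_cast (by omega : 1 ≤ m)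
  have hne : ((m:ℝ)*((m:ℝ)+1)) ≠ 0 := mul_ne_zero (by linarith) (by linarith)
  have hz : ((m:ℝ)*((m:ℝ)+1)) * (K m n + K n m) = 0 := by rw [hs]; ring
  exact (mul_eq_zero.mp hz).resolve_left hne

lemma case2 {n : ℕ} (hn : 1 ≤ n) :
    2 * K n n = 1 / ((n : ℝ) * (2 * (n : ℝ) + 1) * (2 * (n : ℝ) + 2)) := by
  have hs := star n n
  have h1 : PI (p n * qPoly n) = 0 := by
    have hd := PI_derivative (qPoly n * qPoly n)
    rw [eval_mul, eval_mul, eval_q_one hn, eval_q_zero] at hd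
    have hexp : derivative (qPoly n * qPoly n) = p n * qPoly n + p n * qPoly n := by
      rw [derivative_mul, derivative_q]; ring
    rw [hexp, PI_add] at hd
    norm_num at hd
    linarith
  have h2 : PI ((X-1) * p n * p n) = - (1/2) * PI (p n * p n) := by
    rw [show ((X-1) * p n * p n : ℝ[X]) = X * (p n * p n) - p n * p n by ring,
      PI_sub, PI_X_p_sq]
    ring
  rw [h1, h2, PI_p_sq] at hs
  rw [show K n n + K n n = 2 * K n n by ring] at hs
  have hn' : (1:ℝ) ≤ (n:ℝ) := by exact_mod_cast hn
  have h3 : (n:ℝ) ≠ 0 := by linarith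
  have h4 : (n:ℝ)+1 ≠ 0 := by linarith
  have h5 : 2*(n:ℝ)+1 ≠ 0 := by linarith
  rw [show (2*(n:ℝ)+2) = 2*((n:ℝ)+1) by ring, eq_div_iff (by positivity)]
  field_simp at hs
  nlinarith [hs]

lemma coeff_X_sub_one_mul (h : ℝ[X]) (k : ℕ) :
    ((X - 1) * h).coeff (k+1) = h.coeff k - h.coeff (k+1) := by
  rw [sub_mul, one_mul, coeff_sub, coeff_X_mul]

lemma choose_rel (n : ℕ) : (((2*(n+1)).choose (n+1)):ℝ) * ((n:ℝ)+1)^2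
    = (2*(n:ℝ)+1) * (2*(n:ℝ)+2) * ((2*n).choose n : ℝ) := by
  have h1 := Nat.choose_mul_factorial_mul_factorial (show n ≤ 2*n by omega)
  have h2 := Nat.choose_mul_factorial_mul_factorial (show n+1 ≤ 2*(n+1) by omega)
  rw [show 2*n - n = n by omega] at h1
  rw [show 2*(n+1) - (n+1) = n+1 by omega] at h2
  have c1 := congrArg (Nat.cast : ℕ → ℝ) h1
  have c2 := congrArg (Nat.cast : ℕ → ℝ) h2
  push_cast at c1 c2
  have hf1 : ((n+1).factorial : ℝ) = ((n:ℝ)+1) * n.factorial := by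
    rw [Nat.factorial_succ]; push_cast; try ring
  have hf2 : ((2*(n+1)).factorial : ℝ) = (2*(n:ℝ)+2) * (2*(n:ℝ)+1) * (2*n).factorial := by
    rw [show 2*(n+1) = (2*n+1)+1 by ring, Nat.factorial_succ, Nat.factorial_succ]
    push_cast; ring
  have hnf : (n.factorial : ℝ) ≠ 0 := by positivity
  apply mul_right_cancel₀ (show (n.factorial:ℝ) * n.factorial ≠ 0 by positivity)
  rw [hf1, hf2] at c2
  linear_combination c2 - ((2*(n:ℝ)+2)*(2*(n:ℝ)+1)) * c1

lemma case3 (n : ℕ) : K (n+1) n + K n (n+1)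
    = -(1 / ((2*(n:ℝ)+1) * (2*(n:ℝ)+2) * (2*(n:ℝ)+3))) := by
  have hs := star (n+1) n
  set c1 := ((2*n).choose n : ℝ) with hc1d
  set c2 := ((2*(n+1)).choose (n+1) : ℝ) with hc2d
  have h1 : PI (p (n+1) * qPoly n) = (c1/((n:ℝ)+1)) / c2 * (1/(2*((n:ℝ)+1)+1)) := by
    rw [mul_comm]
    have hh := PI_mul_p (k := n+1) (qPoly n) (natDegree_q_le n)
    rw [coeff_q_top, coeff_p_top] at hh
    rw [hh, hc1d, hc2d]
    push_cast
    ring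
  have h2 : PI ((X-1) * p (n+1) * p n) = c1 / c2 * (1/(2*((n:ℝ)+1)+1)) := by
    rw [show ((X-1) * p (n+1) * p n : ℝ[X]) = ((X-1) * p n) * p (n+1) by ring]
    have hX1 : (X - 1 : ℝ[X]).natDegree ≤ 1 := by compute_degree
    have hdeg : ((X-1) * p n).natDegree ≤ n+1 := natDegree_mul_le.trans (by
      have := natDegree_p_le n; omega)
    have hh := PI_mul_p (k := n+1) ((X-1) * p n) hdeg
    rw [coeff_X_sub_one_mul, coeff_p_top,
      coeff_eq_zero_of_natDegree_lt (lt_of_le_of_lt (natDegree_p_le n) (by omega)),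
      sub_zero] at hh
    rw [hh, hc1d, hc2d]
    push_cast
    ring
  rw [h1, h2] at hs
  have hrel := choose_rel n
  rw [← hc1d, ← hc2d] at hrel
  have hc2 : c2 ≠ 0 := by rw [hc2d]; exact_mod_cast choose_ne (n+1)
  have hc1ne : c1 ≠ 0 := by rw [hc1d]; exact_mod_cast choose_ne n
  have hn1 : ((n:ℝ)+1) ≠ 0 := by positivity
  have hn2 : ((n:ℝ)+2) ≠ 0 := by positivity
  have h2n1 : (2*(n:ℝ)+1) ≠ 0 := by positivity
  have h2n3 : (2*(n:ℝ)+3) ≠ 0 := by positivity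
  have hc2eq : c2 = (2*(n:ℝ)+1) * (2*(n:ℝ)+2) * c1 / ((n:ℝ)+1)^2 := by
    field_simp
    apply mul_right_cancel₀ hn1
    linear_combination hrel
  push_cast at hs
  have h2n2 : (2*(n:ℝ)+2) ≠ 0 := by positivity
  have hne : ((n:ℝ)+1)*((n:ℝ)+1+1) ≠ 0 := by positivity
  have hG : K (n+1) n + K n (n+1)
      = (- (c1/((n:ℝ)+1)/c2 * (1/(2*((n:ℝ)+1)+1))) - c1/c2 * (1/(2*((n:ℝ)+1)+1)))
        / (((n:ℝ)+1)*((n:ℝ)+1+1)) := by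
    rw [eq_div_iff hne]
    linarith [hs]
  rw [hG, hc2eq]
  field_simp
  ring

end Leg19

end

theorem stmt19 :
    (∀ m n : ℕ, 2 ≤ ((m : ℤ) - n).natAbs → K m n + K n m = 0) ∧
    (∀ n : ℕ, 1 ≤ n →
      2 * K n n = 1 / ((n : ℝ) * (2 * (n : ℝ) + 1) * (2 * (n : ℝ) + 2))) ∧
    (∀ n : ℕ,
      K (n + 1) n + K n (n + 1) =
        -(1 / ((2 * (n : ℝ) + 1) * (2 * (n : ℝ) + 2) * (2 * (n : ℝ) + 3)))) := by
  refine ⟨fun m n h => ?_, fun n hn => Leg19.case2 hn, fun n => Leg19.case3 n⟩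
  rcases (by omega : n + 2 ≤ m ∨ m + 2 ≤ n) with h' | h'
  · exact Leg19.case1 h'
  · rw [add_comm]
    exact Leg19.case1 h'
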